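/- Let T : {1,2}^ℕ → {1,2}^ℕ be a continuous map such that for all k ≥ 1 and all v, w ∈ {1,2}^ℕ: if v and w agree in coordinates 1,…,k but differ in coordinate k+1, then T v and T w differ in some coordinate j ≤ k. Then the topological entropy of T is at least log 2. -/

import Mathlib

open Dynamics Set Filter
open scoped ENNReal Uniformity

private lemma stmt5_key (T : (ℕ → Bool) → ℕ → Bool)
    (hT : ∀ k, 1 ≤ k → ∀ v w : ℕ → Bool,
      (∀ j, j < k → v j = w j) → v k ≠ w k → ∃ j, j < k ∧ T v j ≠ T w j) :
    ∀ k, ∀ x y : ℕ → Bool, (∀ j, j < k → x j = y j) → x k ≠ y k →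
      ∃ i, i ≤ k ∧ T^[i] x 0 ≠ T^[i] y 0 := by
  intro k
  induction k using Nat.strong_induction_on with
  | _ k ih =>
    intro x y hagree hdiff
    rcases Nat.eq_zero_or_pos k with hk | hk
    · exact ⟨0, Nat.zero_le _, by simpa [hk] using hdiff⟩
    · obtain ⟨j, hj, hTj⟩ := hT k hk x y hagree hdiff
      have hex : ∃ m, T x m ≠ T y m := ⟨j, hTj⟩
      have hmdiff : T x (Nat.find hex) ≠ T y (Nat.find hex) := Nat.find_spec hex
      have hmagree : ∀ j', j' < Nat.find hex → T x j' = T y j' := fun j' hj' =>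
        not_not.mp (Nat.find_min hex hj')
      have hmk : Nat.find hex < k := lt_of_le_of_lt (Nat.find_le hTj) hj
      obtain ⟨i, hik, hi0⟩ := ih _ hmk (T x) (T y) hmagree hmdiff
      refine ⟨i + 1, by omega, ?_⟩
      simpa [Function.iterate_succ_apply] using hi0

/-- if `T : {1,2}^ℕ → {1,2}^ℕ` (modelled as `ℕ → Bool`, coordinate `j : ℕ`
standing for the `(j+1)`-st coordinate) is continuous and whenever two sequences agree in their
first `k` coordinates (`k ≥ 1`) but differ in the `(k+1)`-st, their images under `T` differ in
one of the first `k` coordinates, then the topological entropy of `T` is at least `log 2`. -/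
theorem stmt5 (T : (ℕ → Bool) → ℕ → Bool) (hTcont : Continuous T)
    (hT : ∀ k, 1 ≤ k → ∀ v w : ℕ → Bool,
      (∀ j, j < k → v j = w j) → v k ≠ w k → ∃ j, j < k ∧ T v j ≠ T w j) :
    (Real.log 2 : EReal) ≤ Dynamics.coverEntropy T Set.univ := by
  classical
  set U : Set ((ℕ → Bool) × (ℕ → Bool)) := {p | p.1 0 = p.2 0} with hUdef
  have hU : U ∈ 𝓤 (ℕ → Bool) := by
    have h0 : UniformContinuous fun a : ℕ → Bool => a 0 := Pi.uniformContinuous_proj _ 0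
    have hid : (SetRel.id : Set (Bool × Bool)) ∈ 𝓤 Bool := by
      rw [show 𝓤 Bool = 𝓟 SetRel.id from rfl]
      exact mem_principal_self _
    have := h0 hid
    simpa [U, SetRel.id, Set.preimage, Set.mem_setOf_eq] using this
  -- the key net bound
  have hnet : ∀ n : ℕ, ((2 : ℕ∞) ^ n) ≤ netMaxcard T Set.univ U n := by
    intro n
    set E : (Fin n → Bool) → (ℕ → Bool) :=
      fun f j => if h : j < n then f ⟨j, h⟩ else false with hE
    have hEinj : Function.Injective E := by
      intro f g hfg
      funext i
      have := congrFun hfg i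
      simpa [E, i.isLt] using this
    set s : Finset (ℕ → Bool) := Finset.univ.image E with hs
    have hcard : s.card = 2 ^ n := by
      rw [hs, Finset.card_image_of_injective _ hEinj]
      simp
    have hdyn : IsDynNetIn T Set.univ U n (s : Set (ℕ → Bool)) := by
      refine ⟨Set.subset_univ _, ?_⟩
      intro x hx y hy hxy
      simp only [Function.onFun]
      rw [Set.disjoint_left]
      intro z hz hz'
      have hxz : ∀ k < n, T^[k] x 0 = T^[k] z 0 := by
        have := (mem_dynEntourage (x := x) (y := z)).mp hz
        exact fun k hk => this k hk
      have hyz : ∀ k < n, T^[k] y 0 = T^[k] z 0 := by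
        have := (mem_dynEntourage (x := y) (y := z)).mp hz'
        exact fun k hk => this k hk
      have hxy0 : ∀ k < n, T^[k] x 0 = T^[k] y 0 := fun k hk =>
        (hxz k hk).trans (hyz k hk).symm
      -- x and y come from E, are distinct; find first difference
      have hxfalse : ∀ j, n ≤ j → x j = false := by
        obtain ⟨f, -, rfl⟩ := Finset.mem_image.mp hx
        intro j hj; simp [E, Nat.not_lt.mpr hj]
      have hyfalse : ∀ j, n ≤ j → y j = false := by
        obtain ⟨g, -, rfl⟩ := Finset.mem_image.mp hy
        intro j hj; simp [E, Nat.not_lt.mpr hj]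
      have hexd : ∃ j, x j ≠ y j := by
        by_contra h
        push_neg at h
        exact hxy (funext h)
      set k₀ := Nat.find hexd with hk₀
      have hk₀diff : x k₀ ≠ y k₀ := Nat.find_spec hexd
      have hk₀agree : ∀ j, j < k₀ → x j = y j := fun j hj =>
        not_not.mp (Nat.find_min hexd hj)
      have hk₀n : k₀ < n := by
        by_contra h
        push_neg at h
        exact hk₀diff ((hxfalse k₀ h).trans (hyfalse k₀ h).symm)
      obtain ⟨i, hik, hi0⟩ := stmt5_key T hT k₀ x y hk₀agree hk₀diff
      exact hi0 (hxy0 i (lt_of_le_of_lt hik hk₀n))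
    have := hdyn.card_le_netMaxcard
    rw [hcard] at this
    calc ((2 : ℕ∞) ^ n) = ((2 ^ n : ℕ) : ℕ∞) := by push_cast; ring
      _ ≤ netMaxcard T Set.univ U n := this
  -- entropy bound
  have hlog2 : ENNReal.log 2 = (Real.log 2 : EReal) := by
    rw [ENNReal.log_pos_real (by norm_num) (by norm_num)]
    norm_num
  have hterm : ∀ n : ℕ, 1 ≤ n →
      (Real.log 2 : EReal) ≤ ENNReal.log (netMaxcard T Set.univ U n) / (n : EReal) := by
    intro n hn
    have h1 : ((2 : ℝ≥0∞) ^ n) ≤ ((netMaxcard T Set.univ U n : ℕ∞) : ℝ≥0∞) := by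
      have := hnet n
      calc ((2 : ℝ≥0∞) ^ n) = (((2 : ℕ∞) ^ n : ℕ∞) : ℝ≥0∞) := by push_cast; ring
        _ ≤ _ := by exact_mod_cast this
    have h2 : ((n : EReal)) * (Real.log 2 : EReal) ≤
        ENNReal.log (netMaxcard T Set.univ U n) := by
      calc ((n : EReal)) * (Real.log 2 : EReal) = (n : EReal) * ENNReal.log 2 := by
            rw [hlog2]
        _ = ENNReal.log ((2 : ℝ≥0∞) ^ n) := (ENNReal.log_pow).symm
        _ ≤ _ := ENNReal.log_monotone h1
    have hn0 : (0 : EReal) < (n : EReal) := by exact_mod_cast Nat.cast_pos.mpr hn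
    have hnt : ((n : EReal)) ≠ ⊤ := by
      simp [EReal.natCast_ne_top]
    rw [EReal.le_div_iff_mul_le hn0 hnt]
    calc (Real.log 2 : EReal) * (n : EReal) = (n : EReal) * (Real.log 2 : EReal) := mul_comm _ _
      _ ≤ _ := h2
  have hlimsup : (Real.log 2 : EReal) ≤ netEntropyEntourage T Set.univ U := by
    apply Filter.le_limsup_of_frequently_le
      ((eventually_ge_atTop 1).mono hterm).frequently
  exact hlimsup.trans (netEntropyEntourage_le_coverEntropy T univ hU)
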